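/- arXiv:2604.26535 — 5 statements merged into one kernel-verified Lean document; each statement's English description precedes it below -/
import Mathlib

section
/- For every real number η > 0 and every positive integer ℓ, the fractional binomial coefficient satisfies |(-1)^ℓ · C(-η, ℓ) · Γ(η) · ℓ^(1-η) - 1| ≤ K/ℓ for some constant K depending only on η, where C(-η, ℓ) = (-η)(-η-1)···(-η-ℓ+1)/ℓ!. -/
/-- Generalized binomial coefficient `C(z, ℓ) = z(z-1)⋯(z-ℓ+1)/ℓ!`. -/
noncomputable def gbinom (z : ℝ) (ℓ : ℕ) : ℝ :=
  (descPochhammer ℝ ℓ).eval z / (Nat.factorial ℓ)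

private lemma gamma_asc {y : ℝ} (hy : 0 < y) (k : ℕ) :
    Real.Gamma (y + k) = (ascPochhammer ℝ k).eval y * Real.Gamma y := by
  induction k with
  | zero => simp
  | succ k ih =>
    have hk : (0:ℝ) < y + k := by positivity
    rw [show y + ((k:ℕ)+1 : ℕ) = (y + k) + 1 by push_cast; ring,
      Real.Gamma_add_one hk.ne', ih, ascPochhammer_succ_right]
    simp [Polynomial.eval_mul]
    ring

private lemma gamma_add_nat {y : ℝ} (hy : 0 < y) (m : ℕ) :
    Real.Gamma (y + m) = (∏ j ∈ Finset.range m, (y + j)) * Real.Gamma y := by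
  induction m with
  | zero => simp
  | succ m ih =>
    have hm : (0:ℝ) < y + m := by positivity
    rw [show y + ((m:ℕ)+1 : ℕ) = (y + m) + 1 by push_cast; ring,
      Real.Gamma_add_one hm.ne', ih, Finset.prod_range_succ]
    ring

private lemma wendel_upper {x s : ℝ} (hx : 0 < x) (hs : 0 < s) (hs1 : s ≤ 1) :
    Real.Gamma (x + s) ≤ Real.Gamma (x + 1) * x ^ (s - 1) := by
  rcases eq_or_lt_of_le hs1 with h1 | h1
  · rw [h1]; simp
  · have hG : 0 < Real.Gamma (x + 1) := Real.Gamma_pos_of_pos (by linarith)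
    have key := Real.Gamma_mul_add_mul_le_rpow_Gamma_mul_rpow_Gamma
      (s := x) (t := x + 1) (a := 1 - s) (b := s) hx (by linarith) (by linarith) hs (by ring)
    have hGx : Real.Gamma x = Real.Gamma (x + 1) / x := by
      rw [Real.Gamma_add_one hx.ne']; field_simp
    calc Real.Gamma (x + s) = Real.Gamma ((1-s) * x + s * (x+1)) := by ring_nf
      _ ≤ Real.Gamma x ^ (1-s) * Real.Gamma (x+1) ^ s := key
      _ = Real.Gamma (x+1) * x ^ (s - 1) := by
          rw [hGx, Real.div_rpow hG.le hx.le, div_mul_eq_mul_div, ← Real.rpow_add hG,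
            show (1:ℝ) - s + s = 1 by ring, Real.rpow_one,
            show s - 1 = -(1 - s) by ring, Real.rpow_neg hx.le, div_eq_mul_inv]

private lemma wendel_lower {x s : ℝ} (hx : 0 < x) (hs : 0 < s) (hs1 : s ≤ 1) :
    Real.Gamma (x + 1) ≤ Real.Gamma (x + s) * (x + s) ^ (1 - s) := by
  rcases eq_or_lt_of_le hs1 with h1 | h1
  · rw [h1]; simp
  · have hxs : (0:ℝ) < x + s := by positivity
    have hG : 0 < Real.Gamma (x + s) := Real.Gamma_pos_of_pos hxs
    have key := Real.Gamma_mul_add_mul_le_rpow_Gamma_mul_rpow_Gamma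
      (s := x + s) (t := x + s + 1) (a := s) (b := 1 - s) hxs (by linarith) hs (by linarith)
      (by ring)
    calc Real.Gamma (x + 1) = Real.Gamma (s * (x+s) + (1-s) * (x+s+1)) := by ring_nf
      _ ≤ Real.Gamma (x+s) ^ s * Real.Gamma (x+s+1) ^ (1-s) := key
      _ = Real.Gamma (x+s) * (x+s) ^ (1-s) := by
          rw [Real.Gamma_add_one hxs.ne', Real.mul_rpow hxs.le hG.le, ← mul_assoc,
            mul_comm (Real.Gamma (x+s) ^ s), mul_assoc, ← Real.rpow_add hG,
            show s + (1 - s) = 1 by ring, Real.rpow_one, mul_comm]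

private lemma bernoulli_pow {L η : ℝ} (hL : 1 ≤ L) (hη : 0 ≤ η) (m : ℕ) :
    (1 + η / L) ^ m ≤ 1 + ((1 + η) ^ m - 1) / L := by
  have hL0 : (0:ℝ) < L := lt_of_lt_of_le one_pos hL
  induction m with
  | zero => simp
  | succ m ih =>
    have hC : (0:ℝ) ≤ (1+η)^m - 1 := by
      have : (1:ℝ) ≤ (1+η)^m := one_le_pow₀ (by linarith)
      linarith
    have hd : (0:ℝ) ≤ η / L := by positivity
    calc (1+η/L)^(m+1) = (1+η/L)^m * (1+η/L) := pow_succ _ _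
      _ ≤ (1 + ((1+η)^m - 1)/L) * (1+η/L) :=
          mul_le_mul_of_nonneg_right ih (by positivity)
      _ = 1 + (((1+η)^m - 1) + η)/L + ((1+η)^m - 1)*η/(L*L) := by field_simp; ring
      _ ≤ 1 + (((1+η)^m - 1) + η)/L + ((1+η)^m - 1)*η/L := by
          gcongr 1 + (((1+η)^m - 1) + η)/L + ?_
          have hnum : (0:ℝ) ≤ ((1+η)^m - 1)*η := mul_nonneg hC hη
          have hden : L ≤ L*L := by nlinarith
          exact div_le_div_of_nonneg_left hnum hL0 hden
      _ = 1 + ((1+η)^(m+1) - 1)/L := by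
          rw [add_assoc, ← add_div, pow_succ]
          congr 1
          congr 1
          ring

theorem frac_binom_coef_asymptotics (η : ℝ) (hη : 0 < η) :
    ∃ K : ℝ, ∀ ℓ : ℕ, 1 ≤ ℓ →
      |(-1 : ℝ) ^ ℓ * gbinom (-η) ℓ * Real.Gamma η * (ℓ : ℝ) ^ (1 - η) - 1| ≤ K / ℓ := by
  set m : ℕ := ⌈η⌉₊ - 1 with hm
  set s : ℝ := η - m with hs_def
  have hceil : 1 ≤ ⌈η⌉₊ := Nat.one_le_ceil_iff.mpr hη
  have hm1 : (m:ℝ) + 1 = (⌈η⌉₊ : ℝ) := by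
    rw [hm]; push_cast [Nat.cast_sub hceil]; ring
  have hs_pos : 0 < s := by
    have h2 : (⌈η⌉₊:ℝ) < η + 1 := Nat.ceil_lt_add_one hη.le
    rw [hs_def]; linarith
  have hs_le1 : s ≤ 1 := by
    have := Nat.le_ceil η
    rw [hs_def]; linarith
  have hsm : (m:ℝ) + s = η := by rw [hs_def]; ring
  have hs_le_eta : s ≤ η := by
    have : (0:ℝ) ≤ m := Nat.cast_nonneg m
    linarith
  refine ⟨η + (1+η)^m, fun ℓ hℓ => ?_⟩
  have hL : (1:ℝ) ≤ (ℓ:ℝ) := by exact_mod_cast hℓ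
  set L : ℝ := (ℓ:ℝ) with hLdef
  have hL0 : (0:ℝ) < L := lt_of_lt_of_le one_pos hL
  have hLs : (0:ℝ) < L + s := by positivity
  have hG1 : 0 < Real.Gamma (L + 1) := Real.Gamma_pos_of_pos (by positivity)
  have hGs : 0 < Real.Gamma (L + s) := Real.Gamma_pos_of_pos hLs
  -- rewrite the expression
  have hfact : (Nat.factorial ℓ : ℝ) = Real.Gamma (L + 1) := by
    rw [hLdef, Real.Gamma_nat_eq_factorial]
  have hasc : (ascPochhammer ℝ ℓ).eval η = (-1:ℝ)^ℓ * (descPochhammer ℝ ℓ).eval (-η) := by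
    have := ascPochhammer_eval_neg_eq_descPochhammer (R := ℝ) (-η) ℓ
    simpa using this
  set P : ℝ := ∏ j ∈ Finset.range m, (L + s + j) with hP
  have hGamma_eq : Real.Gamma (η + ℓ) = P * Real.Gamma (L + s) := by
    rw [show η + (ℓ:ℝ) = (L + s) + m by rw [← hsm]; ring]
    exact gamma_add_nat hLs m
  have e1 : (-1 : ℝ) ^ ℓ * gbinom (-η) ℓ * Real.Gamma η * L ^ (1 - η)
      = P * (Real.Gamma (L + s) / Real.Gamma (L + 1)) * L ^ (1 - η) := by
    have h2 : (-1 : ℝ) ^ ℓ * gbinom (-η) ℓ * Real.Gamma η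
        = Real.Gamma (η + ℓ) / Real.Gamma (L + 1) := by
      simp only [gbinom]
      rw [gamma_asc hη ℓ, hasc, hfact]
      field_simp
    rw [h2, hGamma_eq]
    ring
  rw [e1]
  -- bounds on the ratio of Gamma values
  have hRu : Real.Gamma (L + s) / Real.Gamma (L + 1) ≤ L ^ (s - 1) := by
    rw [div_le_iff₀ hG1]
    calc Real.Gamma (L + s) ≤ Real.Gamma (L + 1) * L ^ (s - 1) :=
          wendel_upper hL0 hs_pos hs_le1
      _ = L ^ (s-1) * Real.Gamma (L + 1) := by ring
  have hRl : (L + s) ^ (s - 1) ≤ Real.Gamma (L + s) / Real.Gamma (L + 1) := by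
    rw [le_div_iff₀ hG1]
    have h := wendel_lower hL0 hs_pos hs_le1
    have hpow : (L + s) ^ (s - 1) * (L + s) ^ (1 - s) = 1 := by
      rw [← Real.rpow_add hLs, show s - 1 + (1 - s) = 0 by ring, Real.rpow_zero]
    calc (L + s) ^ (s-1) * Real.Gamma (L + 1)
        ≤ (L + s) ^ (s-1) * (Real.Gamma (L + s) * (L + s) ^ (1 - s)) :=
          mul_le_mul_of_nonneg_left h (Real.rpow_nonneg hLs.le _)
      _ = Real.Gamma (L + s) * ((L + s) ^ (s-1) * (L + s) ^ (1-s)) := by ring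
      _ = Real.Gamma (L + s) := by rw [hpow, mul_one]
  -- bounds on P
  have hPu : P ≤ (L + η) ^ m := by
    calc P ≤ ∏ _j ∈ Finset.range m, (L + η) := by
          apply Finset.prod_le_prod
          · intro j _; positivity
          · intro j hj
            have : (j:ℝ) ≤ m := by
              exact_mod_cast (Finset.mem_range.mp hj).le
            linarith
      _ = (L + η) ^ m := by rw [Finset.prod_const, Finset.card_range]
  have hPl : L ^ m ≤ P := by
    calc L ^ m = ∏ _j ∈ Finset.range m, L := by rw [Finset.prod_const, Finset.card_range]
      _ ≤ P := by
          apply Finset.prod_le_prod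
          · intro j _; exact hL0.le
          · intro j _
            have : (0:ℝ) ≤ (j:ℝ) := Nat.cast_nonneg j
            linarith
  have hP0 : 0 < P := lt_of_lt_of_le (pow_pos hL0 m) hPl
  -- exponent arithmetic
  have hexp1 : L ^ (s - 1) * L ^ (1 - η) = (L ^ m)⁻¹ := by
    rw [← Real.rpow_add hL0, show s - 1 + (1 - η) = -(m:ℝ) by rw [← hsm]; ring,
      Real.rpow_neg hL0.le, Real.rpow_natCast]
  -- upper bound
  have hupper : P * (Real.Gamma (L + s) / Real.Gamma (L + 1)) * L ^ (1 - η)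
      ≤ 1 + ((1 + η) ^ m - 1) / L := by
    have step1 : P * (Real.Gamma (L + s) / Real.Gamma (L + 1)) * L ^ (1 - η)
        ≤ P * L ^ (s - 1) * L ^ (1 - η) := by
      have := mul_le_mul_of_nonneg_left hRu hP0.le
      exact mul_le_mul_of_nonneg_right this (Real.rpow_nonneg hL0.le _)
    have step2 : P * L ^ (s - 1) * L ^ (1 - η) = P / L ^ m := by
      rw [mul_assoc, hexp1, div_eq_mul_inv]
    have step3 : P / L ^ m ≤ ((L + η) / L) ^ m := by
      rw [div_pow]
      exact div_le_div_of_nonneg_right hPu (pow_pos hL0 m).le |>.trans_eq rfl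
    have step4 : ((L + η) / L) ^ m = (1 + η / L) ^ m := by
      rw [add_div, div_self hL0.ne']
    calc P * (Real.Gamma (L + s) / Real.Gamma (L + 1)) * L ^ (1 - η)
        ≤ P * L ^ (s - 1) * L ^ (1 - η) := step1
      _ = P / L ^ m := step2
      _ ≤ (1 + η / L) ^ m := by rw [← step4]; exact step3
      _ ≤ 1 + ((1 + η) ^ m - 1) / L := bernoulli_pow hL hη.le m
  -- lower bound
  have hlower : 1 - η / L
      ≤ P * (Real.Gamma (L + s) / Real.Gamma (L + 1)) * L ^ (1 - η) := by
    have step1 : L ^ (m:ℕ) * (L + s) ^ (s - 1) * L ^ (1 - η)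
        ≤ P * (Real.Gamma (L + s) / Real.Gamma (L + 1)) * L ^ (1 - η) := by
      have h1 : L ^ (m:ℕ) * (L + s) ^ (s - 1)
          ≤ P * (Real.Gamma (L + s) / Real.Gamma (L + 1)) := by
        apply mul_le_mul hPl hRl (Real.rpow_nonneg hLs.le _) hP0.le
      exact mul_le_mul_of_nonneg_right h1 (Real.rpow_nonneg hL0.le _)
    have step2 : L ^ (m:ℕ) * (L + s) ^ (s - 1) * L ^ (1 - η)
        = (L / (L + s)) ^ ((1:ℝ) - s) := by
      rw [Real.div_rpow hL0.le hLs.le]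
      rw [show (L:ℝ) ^ (m:ℕ) = L ^ ((m:ℝ)) by rw [Real.rpow_natCast]]
      rw [mul_comm (L ^ ((m:ℝ))), mul_assoc, ← Real.rpow_add hL0,
        show (m:ℝ) + (1 - η) = 1 - s by rw [← hsm]; ring,
        show s - 1 = -(1 - s) by ring, Real.rpow_neg hLs.le, div_eq_mul_inv, mul_comm]
    have step3 : L / (L + s) ≤ (L / (L + s)) ^ ((1:ℝ) - s) := by
      have ht0 : 0 < L / (L + s) := by positivity
      have ht1 : L / (L + s) ≤ 1 := by
        rw [div_le_one hLs]; linarith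
      calc L / (L + s) = (L / (L + s)) ^ (1:ℝ) := (Real.rpow_one _).symm
        _ ≤ (L / (L + s)) ^ ((1:ℝ) - s) :=
            Real.rpow_le_rpow_of_exponent_ge ht0 ht1 (by linarith)
    have step4 : 1 - η / L ≤ L / (L + s) := by
      have h1 : (L - η)/L ≤ L/(L+s) := by
        rw [div_le_div_iff₀ hL0 hLs]; nlinarith
      have h2 : 1 - η/L = (L-η)/L := by field_simp
      rw [h2]; exact h1
    calc 1 - η / L ≤ L / (L + s) := step4
      _ ≤ (L / (L + s)) ^ ((1:ℝ) - s) := step3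
      _ = L ^ (m:ℕ) * (L + s) ^ (s - 1) * L ^ (1 - η) := step2.symm
      _ ≤ _ := step1
  -- conclude
  have hKl : η ≤ η + (1+η)^m := by
    have h0 : (0:ℝ) ≤ (1+η)^m := pow_nonneg (by linarith) m
    linarith
  have hKu : (1+η)^m - 1 ≤ η + (1+η)^m := by linarith
  rw [abs_le]
  constructor
  · have : (η + (1+η)^m) / L ≥ η / L := by
      apply div_le_div_of_nonneg_right hKl hL0.le |>.trans_eq rfl
    linarith
  · have : ((1+η)^m - 1) / L ≤ (η + (1+η)^m) / L := by
      apply div_le_div_of_nonneg_right hKu hL0.le |>.trans_eq rfl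
    linarith
end

section
/- Let η > 0 and suppose p and q are polynomials with real coefficients such that sup_{|z| ≤ 1, z ∈ ℂ} |(1-z)^η - p(z)/q(z)| < ε. Then for any δ ∈ (0,1) with δ^(-η)·ε < 1, we have sup_{|z| ≤ 1-δ} |(1-z)^(-η) - q(z)/p(z)| < δ^(-2η)·ε / (1 - δ^(-η)·ε). -/
open Polynomial

theorem rational_inversion_trick (η ε : ℝ) (hη : 0 < η) (hε : 0 < ε)
    (p q : Polynomial ℝ)
    (happrox : ∀ z : ℂ, ‖z‖ ≤ 1 →
      ‖(1 - z) ^ (η : ℂ) - (aeval z p) / (aeval z q)‖ < ε)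
    (δ : ℝ) (hδ0 : 0 < δ) (hδ1 : δ < 1) (hsmall : δ ^ (-η) * ε < 1) :
    ∀ z : ℂ, ‖z‖ ≤ 1 - δ →
      ‖(1 - z) ^ (-(η : ℂ)) - (aeval z q) / (aeval z p)‖ <
        δ ^ (-2 * η) * ε / (1 - δ ^ (-η) * ε) := by
  intro z hz
  have hδη : (0:ℝ) < δ ^ η := Real.rpow_pos_of_pos hδ0 η
  have hεδ : ε < δ ^ η := by
    have h1 : (δ ^ η)⁻¹ * ε < 1 := by rwa [Real.rpow_neg hδ0.le] at hsmall
    calc ε = δ ^ η * ((δ ^ η)⁻¹ * ε) := by field_simp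
    _ < δ ^ η * 1 := (mul_lt_mul_iff_right₀ hδη).mpr h1
    _ = δ ^ η := mul_one _
  have hz1 : ‖z‖ ≤ 1 := hz.trans (by linarith)
  have hδle : δ ≤ ‖(1:ℂ) - z‖ := by
    have h := norm_sub_norm_le (1:ℂ) z
    rw [norm_one] at h
    linarith
  have h1z0 : (1:ℂ) - z ≠ 0 := by
    intro h
    rw [h, norm_zero] at hδle
    linarith
  set w := (1 - z) ^ (η:ℂ) with hw
  set r := (aeval z p) / (aeval z q) with hrdef
  have hwnorm : ‖w‖ = ‖(1:ℂ) - z‖ ^ η := by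
    rw [hw, Complex.norm_cpow_real]
  have hw_ge : δ ^ η ≤ ‖w‖ := by
    rw [hwnorm]
    exact Real.rpow_le_rpow hδ0.le hδle hη.le
  have hwr : ‖w - r‖ < ε := happrox z hz1
  have hr_gt : δ ^ η - ε < ‖r‖ := by
    have h := norm_sub_norm_le w r
    linarith
  have hd : (0:ℝ) < δ ^ η - ε := by linarith
  have hr0 : r ≠ 0 := by
    intro h
    rw [h, norm_zero] at hr_gt
    linarith
  have hw0 : w ≠ 0 := by
    intro h
    rw [h, norm_zero] at hw_ge
    linarith
  have hp0 : (aeval z p : ℂ) ≠ 0 := by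
    intro h
    apply hr0
    rw [hrdef, h, zero_div]
  have hq0 : (aeval z q : ℂ) ≠ 0 := by
    intro h
    apply hr0
    rw [hrdef, h, div_zero]
  have hinv : (1 - z) ^ (-(η:ℂ)) = w⁻¹ := by rw [hw, Complex.cpow_neg]
  have hqp : (aeval z q : ℂ) / (aeval z p) = r⁻¹ := by
    rw [hrdef, inv_div]
  rw [hinv, hqp]
  have hkey : w⁻¹ - r⁻¹ = (r - w) * (w * r)⁻¹ := by
    field_simp
  have hnorm : ‖w⁻¹ - r⁻¹‖ = ‖w - r‖ / (‖w‖ * ‖r‖) := by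
    rw [hkey, norm_mul, norm_inv, norm_mul, div_eq_mul_inv, norm_sub_rev]
  rw [hnorm]
  have hDpos : (0:ℝ) < ‖w‖ * ‖r‖ := mul_pos (norm_pos_iff.mpr hw0) (norm_pos_iff.mpr hr0)
  have hdlt : δ ^ η * (δ ^ η - ε) < ‖w‖ * ‖r‖ := by nlinarith
  have hRHS : δ ^ (-2 * η) * ε / (1 - δ ^ (-η) * ε) = ε / (δ ^ η * (δ ^ η - ε)) := by
    have h1 : (0:ℝ) < 1 - δ ^ (-η) * ε := by linarith
    rw [show -2 * η = -η + -η from by ring, Real.rpow_add hδ0]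
    rw [Real.rpow_neg hδ0.le] at h1 ⊢
    rw [div_eq_div_iff (by linarith) (by positivity)]
    field_simp
  rw [hRHS]
  calc ‖w - r‖ / (‖w‖ * ‖r‖) ≤ ε / (‖w‖ * ‖r‖) := by
        exact (div_le_div_iff_of_pos_right hDpos).mpr hwr.le
    _ < ε / (δ ^ η * (δ ^ η - ε)) := by
        exact div_lt_div_of_pos_left hε (by positivity) hdlt
end

section
/- For γ > 1/2 there is a constant K(γ) such that for all μ > 0 and all Δt ∈ (0, 1], Δt · Σ_{j=1}^∞ (jΔt)^(2γ-2) e^(-2μ jΔt) ≤ K(γ) · (1 + μ^(1-2γ) + μ^(-1)). -/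
open Set MeasureTheory

lemma aux_geom (μ Δt : ℝ) (hμ : 0 < μ) (hΔ : 0 < Δt) (hΔ1 : Δt ≤ 1) :
    Δt * (1 - Real.exp (-(μ * Δt)))⁻¹ ≤ μ⁻¹ + 1 := by
  set x := μ * Δt with hx
  have hx0 : 0 < x := mul_pos hμ hΔ
  have h1 : Real.exp (-x) ≤ (1 + x)⁻¹ := by
    rw [Real.exp_neg]
    have h2 : 1 + x ≤ Real.exp x := by linarith [Real.add_one_le_exp x]
    gcongr
  have h2 : x / (1 + x) ≤ 1 - Real.exp (-x) := by
    have : 1 - (1 + x)⁻¹ = x / (1 + x) := by field_simp; ring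
    linarith
  have h3 : 0 < 1 - Real.exp (-x) := by
    have : Real.exp (-x) < 1 := Real.exp_lt_one_iff.mpr (by linarith)
    linarith
  have h2' : x ≤ (1 - Real.exp (-x)) * (1 + x) := by
    rwa [div_le_iff₀ (by linarith : (0:ℝ) < 1 + x)] at h2
  have h4 : (1 - Real.exp (-x))⁻¹ ≤ (1 + x) / x := by
    rw [inv_eq_one_div, div_le_div_iff₀ h3 hx0]
    nlinarith
  calc Δt * (1 - Real.exp (-x))⁻¹ ≤ Δt * ((1 + x) / x) := by
        apply mul_le_mul_of_nonneg_left h4 hΔ.le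
    _ = μ⁻¹ + Δt := by rw [hx]; field_simp
    _ ≤ μ⁻¹ + 1 := by linarith

lemma aux_exp_bound (a : ℝ) (ha : 0 ≤ a) (t : ℝ) (ht : 0 < t) :
    t ^ a * Real.exp (-t) ≤ (Nat.ceil a).factorial := by
  have hfac : (1 : ℝ) ≤ (Nat.ceil a).factorial := by
    exact_mod_cast Nat.one_le_iff_ne_zero.mpr (Nat.factorial_pos _).ne'
  rcases le_total t 1 with h | h
  · have h1 : t ^ a ≤ 1 := Real.rpow_le_one ht.le h ha
    have h2 : Real.exp (-t) ≤ 1 := Real.exp_le_one_iff.mpr (by linarith)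
    nlinarith [Real.rpow_nonneg ht.le a, Real.exp_pos (-t)]
  · have h1 : t ^ a ≤ t ^ (Nat.ceil a : ℝ) :=
      Real.rpow_le_rpow_of_exponent_le h (Nat.le_ceil a)
    rw [Real.rpow_natCast] at h1
    have h2 : t ^ (Nat.ceil a) ≤ (Nat.ceil a).factorial * Real.exp t := by
      have := Real.pow_div_factorial_le_exp (x := t) (by linarith) (Nat.ceil a)
      rw [div_le_iff₀ (by positivity)] at this
      linarith [this]
    calc t ^ a * Real.exp (-t) ≤ ((Nat.ceil a).factorial * Real.exp t) * Real.exp (-t) := by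
          apply mul_le_mul_of_nonneg_right (h1.trans h2) (Real.exp_pos _).le
      _ = (Nat.ceil a).factorial := by rw [mul_assoc, ← Real.exp_add]; simp

lemma aux_union (Δt : ℝ) (hΔ : 0 < Δt) :
    (⋃ j : ℕ, Ioc ((j : ℝ) * Δt) (((j : ℝ) + 1) * Δt)) = Ioi 0 := by
  ext x
  simp only [mem_iUnion, mem_Ioc, mem_Ioi]
  constructor
  · rintro ⟨j, h1, h2⟩
    have : (0:ℝ) ≤ (j : ℝ) * Δt := by positivity
    linarith
  · intro hx
    have hq : 0 < x / Δt := div_pos hx hΔ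
    have hc1 : 0 < ⌈x / Δt⌉₊ := Nat.ceil_pos.mpr hq
    refine ⟨⌈x / Δt⌉₊ - 1, ?_, ?_⟩
    · have hlt : (↑(⌈x / Δt⌉₊ - 1) : ℝ) < x / Δt :=
        Nat.lt_ceil.mp (Nat.sub_lt hc1 one_pos)
      calc (↑(⌈x / Δt⌉₊ - 1) : ℝ) * Δt < (x / Δt) * Δt := by
            apply mul_lt_mul_of_pos_right hlt hΔ
        _ = x := by field_simp
    · have hcast : (↑(⌈x / Δt⌉₊ - 1) : ℝ) + 1 = (⌈x / Δt⌉₊ : ℝ) := by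
        have : 1 ≤ ⌈x / Δt⌉₊ := hc1
        push_cast [this]
        ring
      rw [hcast]
      calc x = (x / Δt) * Δt := by field_simp
        _ ≤ (⌈x / Δt⌉₊ : ℝ) * Δt := by
            apply mul_le_mul_of_nonneg_right (Nat.le_ceil _) hΔ.le

lemma aux_disj (Δt : ℝ) (hΔ : 0 < Δt) :
    Pairwise (Function.onFun Disjoint
      fun j : ℕ => Ioc ((j : ℝ) * Δt) (((j : ℝ) + 1) * Δt)) := by
  have key : ∀ i j : ℕ, i < j →
      Disjoint (Ioc ((i:ℝ)*Δt) (((i:ℝ)+1)*Δt)) (Ioc ((j:ℝ)*Δt) (((j:ℝ)+1)*Δt)) := by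
    intro i j hij
    apply Set.Ioc_disjoint_Ioc.mpr
    have h1 : ((i:ℝ)+1) ≤ (j:ℝ) := by exact_mod_cast hij
    calc min (((i:ℝ)+1)*Δt) (((j:ℝ)+1)*Δt) ≤ ((i:ℝ)+1)*Δt := min_le_left _ _
      _ ≤ (j:ℝ)*Δt := by nlinarith
      _ ≤ max ((i:ℝ)*Δt) ((j:ℝ)*Δt) := le_max_right _ _
  intro i j hij
  rcases hij.lt_or_gt with h | h
  · exact key i j h
  · exact (key j i h).symm

theorem riemann_series_bound (γ : ℝ) (hγ : 1 / 2 < γ) :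
    ∃ K : ℝ, 0 < K ∧ ∀ μ Δt : ℝ, 0 < μ → 0 < Δt → Δt ≤ 1 →
      Δt * (∑' j : ℕ, (((j : ℝ) + 1) * Δt) ^ (2 * γ - 2) *
        Real.exp (-2 * μ * ((j : ℝ) + 1) * Δt)) ≤
      K * (1 + μ ^ (1 - 2 * γ) + μ⁻¹) := by
  rcases lt_or_ge γ 1 with hc | hc
  · -- 1/2 < γ < 1 : integral comparison
    refine ⟨Real.Gamma (2 * γ - 1), Real.Gamma_pos_of_pos (by linarith), ?_⟩
    intro μ Δt hμ hΔ hΔ1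
    set f : ℝ → ℝ := fun x => x ^ (2 * γ - 2) * Real.exp (-(2 * μ * x)) with hf
    have hInt : IntegrableOn f (Ioi 0) := by
      have h := integrableOn_rpow_mul_exp_neg_mul_rpow
        (s := 2 * γ - 2) (p := 1) (b := 2 * μ) (by linarith) one_pos (by linarith)
      refine h.congr_fun (fun x hx => ?_) measurableSet_Ioi
      beta_reduce
      rw [Real.rpow_one]
      simp only [hf]
      ring_nf
    have hGamma : ∫ x in Ioi 0, f x
        = (1 / (2 * μ)) ^ (2 * γ - 1) * Real.Gamma (2 * γ - 1) := by
      have h := Real.integral_rpow_mul_exp_neg_mul_Ioi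
        (a := 2 * γ - 1) (r := 2 * μ) (by linarith) (by linarith)
      have he : (2 * γ - 1) - 1 = 2 * γ - 2 := by ring
      rw [he] at h
      exact h
    set s : ℕ → Set ℝ := fun j => Ioc ((j : ℝ) * Δt) (((j : ℝ) + 1) * Δt) with hs
    have hsub : ∀ j : ℕ, s j ⊆ Ioi 0 := by
      intro j x hx
      have : (0:ℝ) ≤ (j : ℝ) * Δt := by positivity
      exact lt_of_le_of_lt this hx.1
    have hSum : HasSum (fun j : ℕ => ∫ x in s j, f x) (∫ x in Ioi 0, f x) := by
      have := MeasureTheory.hasSum_integral_iUnion (μ := volume) (f := f)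
        (s := s) (fun j => measurableSet_Ioc) (aux_disj Δt hΔ)
        (by rw [hs, aux_union Δt hΔ]; exact hInt)
      rwa [hs, aux_union Δt hΔ] at this
    have hterm : ∀ j : ℕ,
        Δt * ((((j : ℝ) + 1) * Δt) ^ (2 * γ - 2) *
          Real.exp (-2 * μ * ((j : ℝ) + 1) * Δt)) ≤ ∫ x in s j, f x := by
      intro j
      have hvol : (volume (s j)).toReal = Δt := by
        rw [hs]
        simp only [Real.volume_Ioc]
        rw [ENNReal.toReal_ofReal (by nlinarith)]
        ring
      have hconst : ∫ _ in s j, f (((j : ℝ) + 1) * Δt) = Δt * f (((j : ℝ) + 1) * Δt) := by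
        rw [setIntegral_const, measureReal_def, hvol, smul_eq_mul]
      have hle : ∫ _ in s j, f (((j : ℝ) + 1) * Δt) ≤ ∫ x in s j, f x := by
        apply setIntegral_mono_on
        · exact integrableOn_const (by rw [Real.volume_Ioc]; exact ENNReal.ofReal_ne_top)
        · exact hInt.mono_set (hsub j)
        · exact measurableSet_Ioc
        · intro x hx
          have hx0 : 0 < x := hsub j hx
          have h1 : (((j : ℝ) + 1) * Δt) ^ (2 * γ - 2) ≤ x ^ (2 * γ - 2) :=
            Real.rpow_le_rpow_of_nonpos hx0 hx.2 (by linarith)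
          have h2 : Real.exp (-(2 * μ * (((j : ℝ) + 1) * Δt))) ≤ Real.exp (-(2 * μ * x)) := by
            apply Real.exp_le_exp.mpr
            have := mul_le_mul_of_nonneg_left hx.2 (by linarith : (0:ℝ) ≤ 2 * μ)
            linarith
          exact mul_le_mul h1 h2 (Real.exp_pos _).le (Real.rpow_nonneg hx0.le _)
      have heq : f (((j : ℝ) + 1) * Δt)
          = (((j : ℝ) + 1) * Δt) ^ (2 * γ - 2) * Real.exp (-2 * μ * ((j : ℝ) + 1) * Δt) := by
        rw [hf]
        ring_nf
      calc Δt * ((((j : ℝ) + 1) * Δt) ^ (2 * γ - 2) *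
            Real.exp (-2 * μ * ((j : ℝ) + 1) * Δt))
          = ∫ _ in s j, f (((j : ℝ) + 1) * Δt) := by rw [hconst, heq]
        _ ≤ ∫ x in s j, f x := hle
    have hnonneg : ∀ j : ℕ, 0 ≤ Δt * ((((j : ℝ) + 1) * Δt) ^ (2 * γ - 2) *
        Real.exp (-2 * μ * ((j : ℝ) + 1) * Δt)) := by
      intro j
      have : (0:ℝ) < ((j : ℝ) + 1) * Δt := by positivity
      positivity
    have hsummable : Summable (fun j : ℕ => Δt * ((((j : ℝ) + 1) * Δt) ^ (2 * γ - 2) *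
        Real.exp (-2 * μ * ((j : ℝ) + 1) * Δt))) :=
      Summable.of_nonneg_of_le hnonneg hterm hSum.summable
    have hstep : Δt * (∑' j : ℕ, (((j : ℝ) + 1) * Δt) ^ (2 * γ - 2) *
        Real.exp (-2 * μ * ((j : ℝ) + 1) * Δt)) ≤ ∫ x in Ioi 0, f x := by
      rw [← tsum_mul_left]
      rw [← hSum.tsum_eq]
      exact Summable.tsum_le_tsum hterm hsummable hSum.summable
    have hbound : (1 / (2 * μ)) ^ (2 * γ - 1) ≤ μ ^ (1 - 2 * γ) := by
      have e1 : (1 / (2 * μ)) ^ (2 * γ - 1) = (2 * μ) ^ (1 - 2 * γ) := by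
        rw [one_div, Real.inv_rpow (by positivity), ← Real.rpow_neg (by positivity)]
        norm_num
      rw [e1, Real.mul_rpow (by norm_num) hμ.le]
      have h2 : (2:ℝ) ^ (1 - 2 * γ) ≤ 1 :=
        Real.rpow_le_one_of_one_le_of_nonpos one_le_two (by linarith)
      nlinarith [Real.rpow_nonneg hμ.le (1 - 2 * γ)]
    have hΓ : 0 < Real.Gamma (2 * γ - 1) := Real.Gamma_pos_of_pos (by linarith)
    calc Δt * (∑' j : ℕ, (((j : ℝ) + 1) * Δt) ^ (2 * γ - 2) *
          Real.exp (-2 * μ * ((j : ℝ) + 1) * Δt))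
        ≤ ∫ x in Ioi 0, f x := hstep
      _ = (1 / (2 * μ)) ^ (2 * γ - 1) * Real.Gamma (2 * γ - 1) := hGamma
      _ ≤ μ ^ (1 - 2 * γ) * Real.Gamma (2 * γ - 1) :=
          mul_le_mul_of_nonneg_right hbound hΓ.le
      _ ≤ Real.Gamma (2 * γ - 1) * (1 + μ ^ (1 - 2 * γ) + μ⁻¹) := by
          nlinarith [Real.rpow_nonneg hμ.le (1 - 2 * γ), inv_nonneg.mpr hμ.le]
  · set a := 2 * γ - 2 with ha
    have ha0 : 0 ≤ a := by rw [ha]; linarith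
    set n := Nat.ceil a with hn
    have hfac1 : (1:ℝ) ≤ (n.factorial : ℝ) := by
      exact_mod_cast Nat.one_le_iff_ne_zero.mpr (Nat.factorial_pos _).ne'
    refine ⟨2 * (n.factorial : ℝ), by positivity, ?_⟩
    intro μ Δt hμ hΔ hΔ1
    set r := Real.exp (-(μ * Δt)) with hr
    have hr0 : 0 ≤ r := (Real.exp_pos _).le
    have hr1 : r < 1 := Real.exp_lt_one_iff.mpr (by nlinarith)
    set c := (n.factorial : ℝ) * μ ^ (-a) with hc
    have hμa : 0 ≤ μ ^ (-a) := Real.rpow_nonneg hμ.le _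
    have hc0 : 0 ≤ c := by positivity
    have hterm : ∀ j : ℕ, (((j : ℝ) + 1) * Δt) ^ (2 * γ - 2) *
        Real.exp (-2 * μ * ((j : ℝ) + 1) * Δt) ≤ c * (r ^ j * r) := by
      intro j
      set t := μ * (((j : ℝ) + 1) * Δt) with ht
      have ht0 : 0 < t := by positivity
      have h1 : (((j : ℝ) + 1) * Δt) ^ (2 * γ - 2) = t ^ a * μ ^ (-a) := by
        have hre : ((j : ℝ) + 1) * Δt = t * μ⁻¹ := by rw [ht]; field_simp
        rw [← ha, hre, Real.mul_rpow ht0.le (inv_nonneg.mpr hμ.le), Real.inv_rpow hμ.le,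
          ← Real.rpow_neg hμ.le]
      have h2 : Real.exp (-2 * μ * ((j : ℝ) + 1) * Δt) = Real.exp (-t) * (r ^ j * r) := by
        rw [hr, ← Real.exp_nat_mul, ← Real.exp_add, ← Real.exp_add]
        congr 1
        rw [ht]; ring
      rw [h1, h2]
      have key : t ^ a * Real.exp (-t) ≤ (n.factorial : ℝ) := aux_exp_bound a ha0 t ht0
      have hrr : 0 ≤ r ^ j * r := by positivity
      calc t ^ a * μ ^ (-a) * (Real.exp (-t) * (r ^ j * r))
          = (t ^ a * Real.exp (-t)) * (μ ^ (-a) * (r ^ j * r)) := by ring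
        _ ≤ (n.factorial : ℝ) * (μ ^ (-a) * (r ^ j * r)) := by
            apply mul_le_mul_of_nonneg_right key (by positivity)
        _ = c * (r ^ j * r) := by rw [hc]; ring
    have hg : Summable (fun j : ℕ => c * (r ^ j * r)) :=
      (((summable_geometric_of_lt_one hr0 hr1).mul_right r).mul_left c)
    have hes : Summable (fun j : ℕ => (((j : ℝ) + 1) * Δt) ^ (2 * γ - 2) *
        Real.exp (-2 * μ * ((j : ℝ) + 1) * Δt)) := by
      apply Summable.of_nonneg_of_le _ hterm hg
      intro j
      have : (0:ℝ) < ((j : ℝ) + 1) * Δt := by positivity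
      positivity
    have htsumg : ∑' j : ℕ, c * (r ^ j * r) = c * ((1 - r)⁻¹ * r) := by
      rw [tsum_mul_left, tsum_mul_right, tsum_geometric_of_lt_one hr0 hr1]
    have h1r : 0 < 1 - r := by linarith
    have hchain : Δt * (∑' j : ℕ, (((j : ℝ) + 1) * Δt) ^ (2 * γ - 2) *
        Real.exp (-2 * μ * ((j : ℝ) + 1) * Δt)) ≤ c * (μ⁻¹ + 1) := by
      calc Δt * (∑' j : ℕ, (((j : ℝ) + 1) * Δt) ^ (2 * γ - 2) *
            Real.exp (-2 * μ * ((j : ℝ) + 1) * Δt))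
          ≤ Δt * ∑' j : ℕ, c * (r ^ j * r) :=
            mul_le_mul_of_nonneg_left (Summable.tsum_le_tsum hterm hes hg) hΔ.le
        _ = c * (Δt * (1 - r)⁻¹) * r := by rw [htsumg]; ring
        _ ≤ c * (Δt * (1 - r)⁻¹) * 1 := by
            apply mul_le_mul_of_nonneg_left hr1.le
            positivity
        _ = c * (Δt * (1 - r)⁻¹) := mul_one _
        _ ≤ c * (μ⁻¹ + 1) :=
            mul_le_mul_of_nonneg_left (aux_geom μ Δt hμ hΔ hΔ1) hc0
    have hsplit : c * (μ⁻¹ + 1) = (n.factorial : ℝ) * (μ ^ (1 - 2 * γ) + μ ^ (2 - 2 * γ)) := by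
      rw [hc]
      have e1 : μ ^ (-a) * μ⁻¹ = μ ^ (1 - 2 * γ) := by
        rw [← Real.rpow_neg_one μ, ← Real.rpow_add hμ]
        congr 1
        rw [ha]; ring
      have e2 : μ ^ (-a) = μ ^ (2 - 2 * γ) := by
        congr 1
        rw [ha]; ring
      calc (n.factorial : ℝ) * μ ^ (-a) * (μ⁻¹ + 1)
          = (n.factorial : ℝ) * (μ ^ (-a) * μ⁻¹ + μ ^ (-a)) := by ring
        _ = (n.factorial : ℝ) * (μ ^ (1 - 2 * γ) + μ ^ (2 - 2 * γ)) := by rw [e1, e2]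
    have h5 : μ ^ (2 - 2 * γ) ≤ 1 + μ ^ (1 - 2 * γ) := by
      rcases le_total 1 μ with h | h
      · have := Real.rpow_le_one_of_one_le_of_nonpos h (by linarith : 2 - 2 * γ ≤ 0)
        nlinarith [Real.rpow_nonneg hμ.le (1 - 2 * γ)]
      · have := Real.rpow_le_rpow_of_exponent_ge hμ h (by linarith : 1 - 2 * γ ≤ 2 - 2 * γ)
        linarith
    rw [hsplit] at hchain
    have hfin : (n.factorial : ℝ) * (μ ^ (1 - 2 * γ) + μ ^ (2 - 2 * γ))
        ≤ 2 * (n.factorial : ℝ) * (1 + μ ^ (1 - 2 * γ) + μ⁻¹) := by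
      nlinarith [Real.rpow_nonneg hμ.le (1 - 2 * γ), inv_nonneg.mpr hμ.le,
        Real.rpow_nonneg hμ.le (2 - 2 * γ)]
    linarith
end

section
/- For γ > 1/2 and any fixed μ > 0, there is a constant K such that for all n ∈ ℕ and all Δt ∈ (0, 1], |(-1)^n C(-γ, n) e^(-μ n Δt)| · Δt^(2γ-1) ≤ K · Δt^(min(2γ-1, γ)). -/
open Finset

lemma asc_eval_prod (γ : ℝ) (n : ℕ) :
    (ascPochhammer ℝ n).eval γ = ∏ j ∈ Finset.range n, (γ + j) := by
  induction n with
  | zero => simp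
  | succ n ih =>
      rw [ascPochhammer_succ_right, Polynomial.eval_mul, ih, Finset.prod_range_succ]
      simp

lemma neg_pow_gbinom (γ : ℝ) (n : ℕ) :
    (-1 : ℝ) ^ n * ((descPochhammer ℝ n).eval (-γ) / (Nat.factorial n)) =
      (∏ j ∈ Finset.range n, (γ + j)) / (Nat.factorial n) := by
  rw [← asc_eval_prod]
  have h := ascPochhammer_eval_neg_eq_descPochhammer ℝ (-γ) n
  rw [neg_neg] at h
  rw [h]; ring

open Filter Topology in
lemma prod_div_factorial_bound (γ : ℝ) (hγ : 1 ≤ γ) :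
    ∃ C : ℝ, 0 < C ∧ ∀ n : ℕ,
      (∏ j ∈ Finset.range n, (γ + j)) / (Nat.factorial n) ≤ C * ((n : ℝ) + 1) ^ (γ - 1) := by
  have hγ0 : (0:ℝ) < γ := by linarith
  set P : ℕ → ℝ := fun n => (∏ j ∈ Finset.range n, (γ + j)) / (Nat.factorial n) with hP
  have hQpos : ∀ n : ℕ, (0:ℝ) < ∏ j ∈ Finset.range n, (γ + j) := by
    intro n
    exact Finset.prod_pos fun j _ => by positivity
  have hPpos : ∀ n, 0 < P n := by
    intro n
    exact div_pos (hQpos n) (by exact_mod_cast Nat.factorial_pos n)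
  set f : ℕ → ℝ := fun n => P n / (n : ℝ) ^ (γ - 1) with hf
  have hΓ : (0:ℝ) < Real.Gamma γ := Real.Gamma_pos_of_pos hγ0
  have htend : Tendsto f atTop (𝓝 (1 * (Real.Gamma γ)⁻¹)) := by
    have hg : Tendsto (fun n : ℕ => ((n:ℝ) / ((n:ℝ) + γ)) * (Real.GammaSeq γ n)⁻¹) atTop
        (𝓝 (1 * (Real.Gamma γ)⁻¹)) :=
      (tendsto_natCast_div_add_atTop γ).mul ((Real.GammaSeq_tendsto_Gamma γ).inv₀ hΓ.ne')
    refine Tendsto.congr' ?_ hg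
    filter_upwards [eventually_ge_atTop 1] with n hn
    have hn0 : (0:ℝ) < n := by exact_mod_cast hn
    have hfac : ((Nat.factorial n : ℝ)) ≠ 0 := by exact_mod_cast (Nat.factorial_pos n).ne'
    have hrq : (0:ℝ) < (n:ℝ) ^ γ := Real.rpow_pos_of_pos hn0 γ
    have hrp : (n:ℝ) ^ (γ - 1) = (n:ℝ) ^ γ / n := by
      rw [Real.rpow_sub hn0, Real.rpow_one]
    have hGS : Real.GammaSeq γ n =
        (n:ℝ) ^ γ * (Nat.factorial n) / ((∏ j ∈ Finset.range n, (γ + j)) * (γ + n)) := by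
      rw [Real.GammaSeq, Finset.prod_range_succ]
    have hγn : (0:ℝ) < γ + n := by positivity
    rw [hGS, hf, hP]
    simp only
    rw [hrp]
    field_simp
    ring
  have hbdd : BddAbove (Set.range f) := htend.bddAbove_range
  obtain ⟨C₀, hC₀⟩ := hbdd
  refine ⟨max C₀ 1, lt_of_lt_of_le one_pos (le_max_right _ _), fun n => ?_⟩
  rcases Nat.eq_zero_or_pos n with rfl | hn
  · simp only [Finset.range_zero, Finset.prod_empty, Nat.factorial_zero, Nat.cast_one, div_one,
      Nat.cast_zero, zero_add, Real.one_rpow, mul_one]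
    exact le_max_right _ _
  · have hn0 : (0:ℝ) < n := by exact_mod_cast hn
    have hfn : f n ≤ C₀ := hC₀ (Set.mem_range_self n)
    have hrpos : (0:ℝ) < (n:ℝ) ^ (γ - 1) := Real.rpow_pos_of_pos hn0 _
    have h1 : P n ≤ C₀ * (n:ℝ) ^ (γ - 1) := by
      have := (div_le_iff₀ hrpos).mp hfn
      simpa [hf] using this
    have h2 : (n:ℝ) ^ (γ - 1) ≤ ((n:ℝ) + 1) ^ (γ - 1) :=
      Real.rpow_le_rpow hn0.le (by linarith) (by linarith)
    calc P n ≤ C₀ * (n:ℝ) ^ (γ - 1) := h1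
      _ ≤ max C₀ 1 * ((n:ℝ) + 1) ^ (γ - 1) := by
          apply mul_le_mul (le_max_left _ _) h2 hrpos.le
          exact le_trans zero_le_one (le_max_right _ _)

lemma core_exp_bound (μ : ℝ) (hμ : 0 < μ) (p : ℝ) (hp : 0 ≤ p) (x : ℝ) (hx : 0 ≤ x) :
    (x + 1) ^ p * Real.exp (-(μ * x)) ≤
      Real.exp μ * (Nat.factorial ⌈p⌉₊) / μ ^ (⌈p⌉₊) := by
  set q := ⌈p⌉₊ with hq
  have hx1 : (1:ℝ) ≤ x + 1 := by linarith
  have h1 : (x + 1) ^ p ≤ (x + 1) ^ (q : ℝ) :=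
    Real.rpow_le_rpow_of_exponent_le hx1 (Nat.le_ceil p)
  rw [Real.rpow_natCast] at h1
  have h2 : (μ * (x + 1)) ^ q / (Nat.factorial q) ≤ Real.exp (μ * (x + 1)) :=
    Real.pow_div_factorial_le_exp (x := μ * (x + 1)) (by positivity) q
  have hμq : (0:ℝ) < μ ^ q := pow_pos hμ q
  have hfq : (0:ℝ) < (Nat.factorial q : ℝ) := by exact_mod_cast Nat.factorial_pos q
  have h3 : (x + 1) ^ q ≤ (Nat.factorial q : ℝ) / μ ^ q * Real.exp (μ * (x + 1)) := by
    rw [mul_pow] at h2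
    rw [div_le_iff₀ hfq, mul_comm] at h2
    rw [div_mul_eq_mul_div, le_div_iff₀ hμq]
    linarith [h2]
  have hexp : Real.exp (μ * (x + 1)) = Real.exp μ * Real.exp (μ * x) := by
    rw [← Real.exp_add]; ring_nf
  have hepos : (0:ℝ) < Real.exp (-(μ * x)) := Real.exp_pos _
  have h4 : (x + 1) ^ p * Real.exp (-(μ * x)) ≤ (x + 1) ^ q * Real.exp (-(μ * x)) :=
    mul_le_mul_of_nonneg_right h1 hepos.le
  refine h4.trans ?_
  have h5 : (x + 1) ^ q * Real.exp (-(μ * x)) ≤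
      ((Nat.factorial q : ℝ) / μ ^ q * Real.exp (μ * (x + 1))) * Real.exp (-(μ * x)) :=
    mul_le_mul_of_nonneg_right h3 hepos.le
  refine h5.trans_eq ?_
  rw [hexp, Real.exp_neg]
  have hex : Real.exp (μ * x) ≠ 0 := (Real.exp_pos _).ne'
  field_simp

theorem scaled_coefficient_bound (γ μ : ℝ) (hγ : 1 / 2 < γ) (hμ : 0 < μ) :
    ∃ K : ℝ, 0 < K ∧ ∀ n : ℕ, ∀ Δt : ℝ, 0 < Δt → Δt ≤ 1 →
      |(-1 : ℝ) ^ n * gbinom (-γ) n| * Real.exp (-μ * n * Δt) * Δt ^ (2 * γ - 1) ≤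
        K * Δt ^ (min (2 * γ - 1) γ) := by
  have hγ0 : (0:ℝ) < γ := by linarith
  have hkey : ∀ n : ℕ, |(-1 : ℝ) ^ n * gbinom (-γ) n| =
      (∏ j ∈ Finset.range n, (γ + j)) / (Nat.factorial n) := by
    intro n
    have h := neg_pow_gbinom γ n
    rw [gbinom, h]
    refine abs_of_pos ?_
    exact div_pos (Finset.prod_pos fun j _ => by positivity)
      (by exact_mod_cast Nat.factorial_pos n)
  rcases le_or_gt γ 1 with hγ1 | hγ1
  · -- case γ ≤ 1
    refine ⟨1, one_pos, fun n Δt hΔt hΔt1 => ?_⟩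
    have hmin : min (2 * γ - 1) γ = 2 * γ - 1 := min_eq_left (by linarith)
    rw [hmin, hkey, one_mul]
    have hP1 : (∏ j ∈ Finset.range n, (γ + j)) / (Nat.factorial n) ≤ 1 := by
      rw [div_le_one (by exact_mod_cast Nat.factorial_pos n)]
      have h1 : (∏ j ∈ Finset.range n, (γ + j)) ≤ ∏ j ∈ Finset.range n, ((j : ℝ) + 1) := by
        refine Finset.prod_le_prod (fun j _ => by positivity) (fun j _ => by linarith)
      refine h1.trans_eq ?_
      rw [← Finset.prod_range_add_one_eq_factorial]
      push_cast
      rfl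
    have hexp : Real.exp (-μ * n * Δt) ≤ 1 := by
      rw [Real.exp_le_one_iff]
      have : (0:ℝ) ≤ μ * n * Δt := by positivity
      linarith
    have hrpos : (0:ℝ) < Δt ^ (2 * γ - 1) := Real.rpow_pos_of_pos hΔt _
    have hPnn : (0:ℝ) ≤ (∏ j ∈ Finset.range n, (γ + j)) / (Nat.factorial n) := by positivity
    have h2 : (∏ j ∈ Finset.range n, (γ + j)) / (Nat.factorial n) *
        Real.exp (-μ * n * Δt) ≤ 1 := by
      nlinarith [Real.exp_pos (-μ * n * Δt)]
    calc (∏ j ∈ Finset.range n, (γ + j)) / (Nat.factorial n) *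
          Real.exp (-μ * n * Δt) * Δt ^ (2 * γ - 1)
        ≤ 1 * Δt ^ (2 * γ - 1) := mul_le_mul_of_nonneg_right h2 hrpos.le
      _ = Δt ^ (2 * γ - 1) := one_mul _
  · -- case γ > 1
    obtain ⟨C, hC, hbound⟩ := prod_div_factorial_bound γ hγ1.le
    set q := ⌈γ - 1⌉₊ with hq
    set M := Real.exp μ * (Nat.factorial q) / μ ^ q with hM
    have hMpos : 0 < M := by
      rw [hM]
      have : (0:ℝ) < (Nat.factorial q : ℝ) := by exact_mod_cast Nat.factorial_pos q
      positivity
    refine ⟨C * M, by positivity, fun n Δt hΔt hΔt1 => ?_⟩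
    have hmin : min (2 * γ - 1) γ = γ := min_eq_right (by linarith)
    rw [hmin, hkey]
    have hsplit : Δt ^ (2 * γ - 1) = Δt ^ γ * Δt ^ (γ - 1) := by
      rw [← Real.rpow_add hΔt]; ring_nf
    have hγpos : (0:ℝ) < Δt ^ γ := Real.rpow_pos_of_pos hΔt _
    rw [hsplit]
    -- suffices: P n * exp * Δt^(γ-1) ≤ C * M
    have main : (∏ j ∈ Finset.range n, (γ + j)) / (Nat.factorial n) *
        Real.exp (-μ * n * Δt) * Δt ^ (γ - 1) ≤ C * M := by
      set x : ℝ := (n : ℝ) * Δt with hx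
      have hx0 : (0:ℝ) ≤ x := by positivity
      have hexparg : -μ * n * Δt = -(μ * x) := by rw [hx]; ring
      have h1 : (∏ j ∈ Finset.range n, (γ + j)) / (Nat.factorial n) ≤
          C * ((n : ℝ) + 1) ^ (γ - 1) := hbound n
      have hr1 : ((n : ℝ) + 1) ^ (γ - 1) * Δt ^ (γ - 1) = (((n : ℝ) + 1) * Δt) ^ (γ - 1) :=
        (Real.mul_rpow (by positivity) hΔt.le).symm
      have hr2 : (((n : ℝ) + 1) * Δt) ^ (γ - 1) ≤ (x + 1) ^ (γ - 1) := by
        refine Real.rpow_le_rpow (by positivity) ?_ (by linarith)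
        rw [hx]; nlinarith
      have hcore := core_exp_bound μ hμ (γ - 1) (by linarith) x hx0
      rw [← hM] at hcore
      have hepos : (0:ℝ) < Real.exp (-(μ * x)) := Real.exp_pos _
      have hrtpos : (0:ℝ) < Δt ^ (γ - 1) := Real.rpow_pos_of_pos hΔt _
      calc (∏ j ∈ Finset.range n, (γ + j)) / (Nat.factorial n) *
            Real.exp (-μ * n * Δt) * Δt ^ (γ - 1)
          ≤ C * ((n : ℝ) + 1) ^ (γ - 1) * Real.exp (-μ * n * Δt) * Δt ^ (γ - 1) := by
            gcongr
        _ = C * ((((n : ℝ) + 1) * Δt) ^ (γ - 1) * Real.exp (-(μ * x))) := by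
            rw [hexparg, ← hr1]; ring
        _ ≤ C * ((x + 1) ^ (γ - 1) * Real.exp (-(μ * x))) := by
            refine mul_le_mul_of_nonneg_left (mul_le_mul_of_nonneg_right hr2 hepos.le) hC.le
        _ ≤ C * M := mul_le_mul_of_nonneg_left hcore hC.le
    calc (∏ j ∈ Finset.range n, (γ + j)) / (Nat.factorial n) *
          Real.exp (-μ * n * Δt) * (Δt ^ γ * Δt ^ (γ - 1))
        = ((∏ j ∈ Finset.range n, (γ + j)) / (Nat.factorial n) *
            Real.exp (-μ * n * Δt) * Δt ^ (γ - 1)) * Δt ^ γ := by ring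
      _ ≤ (C * M) * Δt ^ γ := mul_le_mul_of_nonneg_right main hγpos.le
end

section
/- Let γ > 1/2, μ > 0, λ > 0. The stationary covariance function C(h) = (λ e^{-μ|h|} / ((2μ)^{2γ-1} Γ(γ)²)) ∫_0^∞ (u + 2μ|h|)^{γ-1} u^{γ-1} e^{-u} du satisfies 0 < C(h) ≤ C(0) for all h ∈ ℝ, and C(h) → 0 as |h| → ∞. -/
open MeasureTheory Filter

open Set in
private lemma fou_meas (γ a : ℝ) :
    Measurable (fun u : ℝ => (u + a) ^ (γ - 1) * u ^ (γ - 1) * Real.exp (-u)) :=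
  (((measurable_id.add_const a).pow measurable_const).mul
    (measurable_id.pow measurable_const)).mul (Real.measurable_exp.comp measurable_neg)

open Set in
private lemma fou_integrable {γ : ℝ} (hγ : 1 / 2 < γ) {a : ℝ} (ha : 0 ≤ a) :
    IntegrableOn (fun u : ℝ => (u + a) ^ (γ - 1) * u ^ (γ - 1) * Real.exp (-u)) (Ioi 0) := by
  have hΓ1 : IntegrableOn (fun u : ℝ => Real.exp (-u) * u ^ (2 * γ - 2)) (Ioi 0) := by
    have := Real.GammaIntegral_convergent (s := 2 * γ - 1) (by linarith)
    simpa [show 2 * γ - 1 - 1 = 2 * γ - 2 by ring] using this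
  have hΓ2 : IntegrableOn (fun u : ℝ => Real.exp (-u) * u ^ (γ - 1)) (Ioi 0) := by
    simpa using Real.GammaIntegral_convergent (s := γ) (by linarith)
  rcases le_or_gt γ 1 with hγ1 | hγ1
  · refine Integrable.mono' hΓ1 (fou_meas γ a).aestronglyMeasurable ?_
    filter_upwards [ae_restrict_mem measurableSet_Ioi] with u hu
    have hu0 : (0 : ℝ) < u := hu
    have hnn : 0 ≤ (u + a) ^ (γ - 1) * u ^ (γ - 1) * Real.exp (-u) :=
      mul_nonneg (mul_nonneg (Real.rpow_nonneg (by linarith) _)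
        (Real.rpow_nonneg hu0.le _)) (Real.exp_pos _).le
    rw [Real.norm_eq_abs, abs_of_nonneg hnn]
    have h1 : (u + a) ^ (γ - 1) ≤ u ^ (γ - 1) :=
      Real.rpow_le_rpow_of_nonpos hu0 (by linarith) (by linarith)
    have huu : u ^ (γ - 1) * u ^ (γ - 1) = u ^ (2 * γ - 2) := by
      rw [← Real.rpow_add hu0]; ring_nf
    calc (u + a) ^ (γ - 1) * u ^ (γ - 1) * Real.exp (-u)
        ≤ u ^ (γ - 1) * u ^ (γ - 1) * Real.exp (-u) :=
          mul_le_mul_of_nonneg_right (mul_le_mul_of_nonneg_right h1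
            (Real.rpow_nonneg hu0.le _)) (Real.exp_pos _).le
      _ = Real.exp (-u) * u ^ (2 * γ - 2) := by rw [huu]; ring
  · refine Integrable.mono' ((hΓ1.const_mul (2 ^ (γ - 1))).add
      (hΓ2.const_mul (2 ^ (γ - 1) * a ^ (γ - 1)))) (fou_meas γ a).aestronglyMeasurable ?_
    filter_upwards [ae_restrict_mem measurableSet_Ioi] with u hu
    have hu0 : (0 : ℝ) < u := hu
    have hnn : 0 ≤ (u + a) ^ (γ - 1) * u ^ (γ - 1) * Real.exp (-u) :=
      mul_nonneg (mul_nonneg (Real.rpow_nonneg (by linarith) _)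
        (Real.rpow_nonneg hu0.le _)) (Real.exp_pos _).le
    rw [Real.norm_eq_abs, abs_of_nonneg hnn]
    have hmax : u + a ≤ 2 * max u a := by
      have := le_max_left u a; have := le_max_right u a; linarith
    have h2 : (u + a) ^ (γ - 1) ≤ 2 ^ (γ - 1) * (u ^ (γ - 1) + a ^ (γ - 1)) := by
      calc (u + a) ^ (γ - 1) ≤ (2 * max u a) ^ (γ - 1) :=
            Real.rpow_le_rpow (by linarith) hmax (by linarith)
        _ = 2 ^ (γ - 1) * (max u a) ^ (γ - 1) :=
            Real.mul_rpow (by norm_num) (le_max_of_le_left hu0.le)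
        _ ≤ 2 ^ (γ - 1) * (u ^ (γ - 1) + a ^ (γ - 1)) := by
            refine mul_le_mul_of_nonneg_left ?_ (Real.rpow_nonneg (by norm_num) _)
            rcases max_cases u a with ⟨h, _⟩ | ⟨h, _⟩ <;> rw [h]
            · have := Real.rpow_nonneg ha (γ - 1); linarith
            · have := Real.rpow_nonneg hu0.le (γ - 1); linarith
    have huu : u ^ (γ - 1) * u ^ (γ - 1) = u ^ (2 * γ - 2) := by
      rw [← Real.rpow_add hu0]; ring_nf
    calc (u + a) ^ (γ - 1) * u ^ (γ - 1) * Real.exp (-u)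
        ≤ 2 ^ (γ - 1) * (u ^ (γ - 1) + a ^ (γ - 1)) * u ^ (γ - 1) * Real.exp (-u) :=
          mul_le_mul_of_nonneg_right (mul_le_mul_of_nonneg_right h2
            (Real.rpow_nonneg hu0.le _)) (Real.exp_pos _).le
      _ = 2 ^ (γ - 1) * (Real.exp (-u) * u ^ (2 * γ - 2)) +
          2 ^ (γ - 1) * a ^ (γ - 1) * (Real.exp (-u) * u ^ (γ - 1)) := by
            rw [← huu]; ring

open Set in
private lemma fou_pos {γ : ℝ} (hγ : 1 / 2 < γ) {a : ℝ} (ha : 0 ≤ a) :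
    0 < ∫ u in Ioi (0 : ℝ), (u + a) ^ (γ - 1) * u ^ (γ - 1) * Real.exp (-u) := by
  rw [MeasureTheory.setIntegral_pos_iff_support_of_nonneg_ae ?_ (fou_integrable hγ ha)]
  · refine lt_of_lt_of_le ?_ (measure_mono (fun u hu => ⟨?_, hu⟩))
    · simp [Real.volume_Ioi]
    · have hu0 : (0 : ℝ) < u := hu
      exact (mul_pos (mul_pos (Real.rpow_pos_of_pos (by linarith) _)
        (Real.rpow_pos_of_pos hu0 _)) (Real.exp_pos _)).ne'
  · filter_upwards [ae_restrict_mem measurableSet_Ioi] with u hu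
    have hu0 : (0 : ℝ) < u := hu
    exact mul_nonneg (mul_nonneg (Real.rpow_nonneg (by linarith) _)
      (Real.rpow_nonneg hu0.le _)) (Real.exp_pos _).le

open Set in
private lemma shift_Ioi (f : ℝ → ℝ) (x : ℝ) :
    ∫ u in Ioi (0 : ℝ), f u = ∫ s in Ioi x, f (s - x) := by
  rw [← MeasureTheory.integral_indicator measurableSet_Ioi,
    ← MeasureTheory.integral_indicator measurableSet_Ioi,
    ← MeasureTheory.integral_sub_right_eq_self ((Ioi (0 : ℝ)).indicator f) x]
  congr 1
  funext s
  by_cases hs : x < s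
  · rw [Set.indicator_of_mem (by simp [sub_pos, hs] : s - x ∈ Ioi (0 : ℝ)),
      Set.indicator_of_mem (mem_Ioi.2 hs)]
  · rw [Set.indicator_of_notMem (by simpa [sub_pos] using hs),
      Set.indicator_of_notMem (by simpa using hs)]

open Set in
/-- the core monotone bound -/
private lemma fou_key {γ : ℝ} (hγ : 1 / 2 < γ) {x : ℝ} (hx : 0 ≤ x) :
    Real.exp (-x) * ∫ u in Ioi (0 : ℝ), (u + 2 * x) ^ (γ - 1) * u ^ (γ - 1) * Real.exp (-u)
      ≤ ∫ u in Ioi (0 : ℝ), u ^ (γ - 1) * u ^ (γ - 1) * Real.exp (-u) := by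
  have hI0 : IntegrableOn (fun u : ℝ => u ^ (γ - 1) * u ^ (γ - 1) * Real.exp (-u)) (Ioi 0) := by
    have := fou_integrable hγ (le_refl 0)
    simpa using this
  rcases le_or_gt γ 1 with hγ1 | hγ1
  · rw [← MeasureTheory.integral_const_mul]
    refine MeasureTheory.integral_mono_of_nonneg ?_ hI0 ?_
    · filter_upwards [ae_restrict_mem measurableSet_Ioi] with u hu
      have hu0 : (0 : ℝ) < u := hu
      exact mul_nonneg (Real.exp_pos _).le (mul_nonneg (mul_nonneg
        (Real.rpow_nonneg (by linarith) _) (Real.rpow_nonneg hu0.le _)) (Real.exp_pos _).le)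
    · filter_upwards [ae_restrict_mem measurableSet_Ioi] with u hu
      have hu0 : (0 : ℝ) < u := hu
      have h1 : (u + 2 * x) ^ (γ - 1) ≤ u ^ (γ - 1) :=
        Real.rpow_le_rpow_of_nonpos hu0 (by linarith) (by linarith)
      have hex : Real.exp (-x) ≤ 1 := by
        simpa using Real.exp_le_exp.2 (by linarith : -x ≤ (0:ℝ))
      calc Real.exp (-x) * ((u + 2 * x) ^ (γ - 1) * u ^ (γ - 1) * Real.exp (-u))
          ≤ 1 * ((u + 2 * x) ^ (γ - 1) * u ^ (γ - 1) * Real.exp (-u)) :=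
            mul_le_mul_of_nonneg_right hex (mul_nonneg (mul_nonneg
              (Real.rpow_nonneg (by linarith) _) (Real.rpow_nonneg hu0.le _)) (Real.exp_pos _).le)
        _ = (u + 2 * x) ^ (γ - 1) * u ^ (γ - 1) * Real.exp (-u) := one_mul _
        _ ≤ u ^ (γ - 1) * u ^ (γ - 1) * Real.exp (-u) :=
            mul_le_mul_of_nonneg_right (mul_le_mul_of_nonneg_right h1
              (Real.rpow_nonneg hu0.le _)) (Real.exp_pos _).le
  · -- γ > 1 : shift the integral by x
    have hshift : Real.exp (-x) *
        (∫ u in Ioi (0 : ℝ), (u + 2 * x) ^ (γ - 1) * u ^ (γ - 1) * Real.exp (-u))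
        = ∫ s in Ioi x, (s + x) ^ (γ - 1) * (s - x) ^ (γ - 1) * Real.exp (-s) := by
      rw [← MeasureTheory.integral_const_mul,
        shift_Ioi (fun u => Real.exp (-x) * ((u + 2 * x) ^ (γ - 1) * u ^ (γ - 1) * Real.exp (-u))) x]
      refine setIntegral_congr_fun measurableSet_Ioi fun s hs => ?_
      have h1 : s - x + 2 * x = s + x := by ring
      have h2 : Real.exp (-x) * Real.exp (-(s - x)) = Real.exp (-s) := by
        rw [← Real.exp_add]; ring_nf
      calc Real.exp (-x) * ((s - x + 2 * x) ^ (γ - 1) * (s - x) ^ (γ - 1) * Real.exp (-(s - x)))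
          = (s - x + 2 * x) ^ (γ - 1) * (s - x) ^ (γ - 1) *
            (Real.exp (-x) * Real.exp (-(s - x))) := by ring
        _ = (s + x) ^ (γ - 1) * (s - x) ^ (γ - 1) * Real.exp (-s) := by rw [h1, h2]
    rw [hshift]
    have step1 : (∫ s in Ioi x, (s + x) ^ (γ - 1) * (s - x) ^ (γ - 1) * Real.exp (-s))
        ≤ ∫ s in Ioi x, s ^ (γ - 1) * s ^ (γ - 1) * Real.exp (-s) := by
      refine MeasureTheory.integral_mono_of_nonneg ?_ (hI0.mono_set (Ioi_subset_Ioi hx)) ?_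
      · filter_upwards [ae_restrict_mem measurableSet_Ioi] with s hs
        have hsx : x < s := hs
        exact mul_nonneg (mul_nonneg (Real.rpow_nonneg (by linarith) _)
          (Real.rpow_nonneg (by linarith) _)) (Real.exp_pos _).le
      · filter_upwards [ae_restrict_mem measurableSet_Ioi] with s hs
        have hsx : x < s := hs
        have hs0 : (0:ℝ) < s := lt_of_le_of_lt hx hsx
        have hkey : (s + x) ^ (γ - 1) * (s - x) ^ (γ - 1) ≤ s ^ (γ - 1) * s ^ (γ - 1) := by
          rw [← Real.mul_rpow (by linarith) (by linarith), ← Real.mul_rpow hs0.le hs0.le]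
          exact Real.rpow_le_rpow (by nlinarith) (by nlinarith) (by linarith)
        exact mul_le_mul_of_nonneg_right hkey (Real.exp_pos _).le
    have step2 : (∫ s in Ioi x, s ^ (γ - 1) * s ^ (γ - 1) * Real.exp (-s))
        ≤ ∫ s in Ioi (0 : ℝ), s ^ (γ - 1) * s ^ (γ - 1) * Real.exp (-s) := by
      refine MeasureTheory.setIntegral_mono_set hI0 ?_ (HasSubset.Subset.eventuallyLE (Ioi_subset_Ioi hx))
      filter_upwards [ae_restrict_mem measurableSet_Ioi] with s hs
      have hs0 : (0 : ℝ) < s := hs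
      exact mul_nonneg (mul_nonneg (Real.rpow_nonneg hs0.le _)
        (Real.rpow_nonneg hs0.le _)) (Real.exp_pos _).le
    exact le_trans step1 step2

/-- Stationary covariance function of the fractional OU-type process. -/
noncomputable def statCov (γ μ lam : ℝ) (h : ℝ) : ℝ :=
  lam * Real.exp (-μ * |h|) / ((2 * μ) ^ (2 * γ - 1) * Real.Gamma γ ^ 2) *
    ∫ u in Set.Ioi (0 : ℝ), (u + 2 * μ * |h|) ^ (γ - 1) * u ^ (γ - 1) * Real.exp (-u)

open Set in
theorem statCov_bounds (γ μ lam : ℝ) (hγ : 1 / 2 < γ) (hμ : 0 < μ) (hlam : 0 < lam) :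
    (∀ h : ℝ, 0 < statCov γ μ lam h ∧ statCov γ μ lam h ≤ statCov γ μ lam 0) ∧
      Tendsto (statCov γ μ lam) (cocompact ℝ) (nhds 0) := by
  have hγ0 : (0 : ℝ) < γ := by linarith
  set D : ℝ := (2 * μ) ^ (2 * γ - 1) * Real.Gamma γ ^ 2 with hD
  have hDpos : 0 < D :=
    mul_pos (Real.rpow_pos_of_pos (by linarith) _) (pow_pos (Real.Gamma_pos_of_pos hγ0) 2)
  set G : ℝ → ℝ := fun x => lam / D *
    (Real.exp (-x) * ∫ u in Ioi (0 : ℝ), (u + 2 * x) ^ (γ - 1) * u ^ (γ - 1) * Real.exp (-u))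
    with hG
  have hstat : ∀ h : ℝ, statCov γ μ lam h = G (μ * |h|) := by
    intro h
    have h1 : (fun u : ℝ => (u + 2 * μ * |h|) ^ (γ - 1) * u ^ (γ - 1) * Real.exp (-u))
        = fun u : ℝ => (u + 2 * (μ * |h|)) ^ (γ - 1) * u ^ (γ - 1) * Real.exp (-u) := by
      funext u; rw [mul_assoc 2 μ |h|]
    show lam * Real.exp (-μ * |h|) / D * ∫ u in Ioi (0 : ℝ),
        (u + 2 * μ * |h|) ^ (γ - 1) * u ^ (γ - 1) * Real.exp (-u) = _
    rw [h1, hG, neg_mul]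
    ring
  -- positivity and the bound for G
  have hGpos : ∀ x : ℝ, 0 ≤ x → 0 < G x := by
    intro x hx
    exact mul_pos (div_pos hlam hDpos)
      (mul_pos (Real.exp_pos _) (fou_pos hγ (by linarith : (0:ℝ) ≤ 2 * x)))
  have hG0 : G 0 = lam / D * ∫ u in Ioi (0 : ℝ), u ^ (γ - 1) * u ^ (γ - 1) * Real.exp (-u) := by
    rw [hG]; norm_num
  have hGle : ∀ x : ℝ, 0 ≤ x → G x ≤ G 0 := by
    intro x hx
    rw [hG0, hG]
    exact mul_le_mul_of_nonneg_left (fou_key hγ hx) (div_pos hlam hDpos).le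
  constructor
  · intro h
    have habs : 0 ≤ μ * |h| := mul_nonneg hμ.le (abs_nonneg h)
    have h0 : statCov γ μ lam 0 = G 0 := by
      rw [hstat 0]; norm_num
    rw [hstat h, h0]
    exact ⟨hGpos _ habs, hGle _ habs⟩
  · -- decay
    have hΓ2 : IntegrableOn (fun u : ℝ => Real.exp (-u) * u ^ (γ - 1)) (Ioi 0) := by
      simpa using Real.GammaIntegral_convergent (s := γ) (by linarith)
    have hI0 : IntegrableOn (fun u : ℝ => u ^ (γ - 1) * u ^ (γ - 1) * Real.exp (-u)) (Ioi 0) := by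
      have := fou_integrable hγ (le_refl 0); simpa using this
    set A : ℝ := ∫ u in Ioi (0 : ℝ), u ^ (γ - 1) * u ^ (γ - 1) * Real.exp (-u) with hA
    set B : ℝ := ∫ u in Ioi (0 : ℝ), Real.exp (-u) * u ^ (γ - 1) with hB
    -- master bound : for x ≥ 0, G x ≤ lam/D * (2^(γ-1)+1) * (A * exp (-x) + B * ((2*x)^(γ-1) * exp (-x)))
    have hbound : ∀ x : ℝ, 0 ≤ x → G x ≤ lam / D * ((2 ^ (γ - 1) + 1) *
        (A * Real.exp (-x) + B * ((2 * x) ^ (γ - 1) * Real.exp (-x)))) := by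
      intro x hx
      rw [hG]
      refine mul_le_mul_of_nonneg_left ?_ (div_pos hlam hDpos).le
      have hIle : (∫ u in Ioi (0:ℝ), (u + 2 * x) ^ (γ - 1) * u ^ (γ - 1) * Real.exp (-u))
          ≤ (2 ^ (γ - 1) + 1) * (A + (2 * x) ^ (γ - 1) * B) := by
        have hmono : (∫ u in Ioi (0:ℝ), (u + 2 * x) ^ (γ - 1) * u ^ (γ - 1) * Real.exp (-u))
            ≤ ∫ u in Ioi (0:ℝ), ((2 ^ (γ - 1) + 1) * (u ^ (γ - 1) * u ^ (γ - 1) * Real.exp (-u))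
              + ((2 ^ (γ - 1) + 1) * (2 * x) ^ (γ - 1)) * (Real.exp (-u) * u ^ (γ - 1))) := by
          refine MeasureTheory.integral_mono_of_nonneg ?_
            ((hI0.const_mul _).add (hΓ2.const_mul _)) ?_
          · filter_upwards [ae_restrict_mem measurableSet_Ioi] with u hu
            have hu0 : (0 : ℝ) < u := hu
            exact mul_nonneg (mul_nonneg (Real.rpow_nonneg (by linarith) _)
              (Real.rpow_nonneg hu0.le _)) (Real.exp_pos _).le
          · filter_upwards [ae_restrict_mem measurableSet_Ioi] with u hu
            have hu0 : (0 : ℝ) < u := hu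
            have h2p : (0:ℝ) ≤ 2 ^ (γ - 1) := Real.rpow_nonneg (by norm_num) _
            have hkey : (u + 2 * x) ^ (γ - 1)
                ≤ (2 ^ (γ - 1) + 1) * (u ^ (γ - 1) + (2 * x) ^ (γ - 1)) := by
              rcases le_or_gt γ 1 with hγ1 | hγ1
              · have h1 : (u + 2 * x) ^ (γ - 1) ≤ u ^ (γ - 1) :=
                  Real.rpow_le_rpow_of_nonpos hu0 (by linarith) (by linarith)
                have h2 : (0:ℝ) ≤ (2 * x) ^ (γ - 1) := Real.rpow_nonneg (by linarith) _
                have h3 : (0:ℝ) ≤ u ^ (γ - 1) := Real.rpow_nonneg hu0.le _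
                nlinarith
              · have hmax : u + 2 * x ≤ 2 * max u (2 * x) := by
                  have := le_max_left u (2 * x); have := le_max_right u (2 * x); linarith
                have h4 : (u + 2 * x) ^ (γ - 1)
                    ≤ 2 ^ (γ - 1) * (u ^ (γ - 1) + (2 * x) ^ (γ - 1)) := by
                  calc (u + 2 * x) ^ (γ - 1) ≤ (2 * max u (2 * x)) ^ (γ - 1) :=
                        Real.rpow_le_rpow (by linarith) hmax (by linarith)
                    _ = 2 ^ (γ - 1) * (max u (2 * x)) ^ (γ - 1) :=
                        Real.mul_rpow (by norm_num) (le_max_of_le_left hu0.le)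
                    _ ≤ 2 ^ (γ - 1) * (u ^ (γ - 1) + (2 * x) ^ (γ - 1)) := by
                        refine mul_le_mul_of_nonneg_left ?_ h2p
                        rcases max_cases u (2 * x) with ⟨h, _⟩ | ⟨h, _⟩ <;> rw [h]
                        · have := Real.rpow_nonneg (by linarith : (0:ℝ) ≤ 2 * x) (γ - 1); linarith
                        · have := Real.rpow_nonneg hu0.le (γ - 1); linarith
                have h5 : (0:ℝ) ≤ u ^ (γ - 1) + (2 * x) ^ (γ - 1) :=
                  add_nonneg (Real.rpow_nonneg hu0.le _) (Real.rpow_nonneg (by linarith) _)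
                nlinarith
            have hrest : (0:ℝ) ≤ u ^ (γ - 1) * Real.exp (-u) :=
              mul_nonneg (Real.rpow_nonneg hu0.le _) (Real.exp_pos _).le
            calc (u + 2 * x) ^ (γ - 1) * u ^ (γ - 1) * Real.exp (-u)
                = (u + 2 * x) ^ (γ - 1) * (u ^ (γ - 1) * Real.exp (-u)) := by ring
              _ ≤ (2 ^ (γ - 1) + 1) * (u ^ (γ - 1) + (2 * x) ^ (γ - 1)) *
                  (u ^ (γ - 1) * Real.exp (-u)) := mul_le_mul_of_nonneg_right hkey hrest
              _ = (2 ^ (γ - 1) + 1) * (u ^ (γ - 1) * u ^ (γ - 1) * Real.exp (-u))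
                  + ((2 ^ (γ - 1) + 1) * (2 * x) ^ (γ - 1)) * (Real.exp (-u) * u ^ (γ - 1)) := by
                  ring
        rw [MeasureTheory.integral_add (hI0.const_mul _) (hΓ2.const_mul _),
          MeasureTheory.integral_const_mul, MeasureTheory.integral_const_mul] at hmono
        calc (∫ u in Ioi (0:ℝ), (u + 2 * x) ^ (γ - 1) * u ^ (γ - 1) * Real.exp (-u))
            ≤ (2 ^ (γ - 1) + 1) * A + (2 ^ (γ - 1) + 1) * (2 * x) ^ (γ - 1) * B := hmono
          _ = (2 ^ (γ - 1) + 1) * (A + (2 * x) ^ (γ - 1) * B) := by ring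
      calc Real.exp (-x) * ∫ u in Ioi (0:ℝ), (u + 2 * x) ^ (γ - 1) * u ^ (γ - 1) * Real.exp (-u)
          ≤ Real.exp (-x) * ((2 ^ (γ - 1) + 1) * (A + (2 * x) ^ (γ - 1) * B)) :=
            mul_le_mul_of_nonneg_left hIle (Real.exp_pos _).le
        _ = (2 ^ (γ - 1) + 1) * (A * Real.exp (-x) + B * ((2 * x) ^ (γ - 1) * Real.exp (-x))) := by
            ring
    -- the dominating function tends to 0 at atTop
    have t1 : Tendsto (fun x : ℝ => Real.exp (-x)) atTop (nhds 0) :=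
      Real.tendsto_exp_atBot.comp tendsto_neg_atTop_atBot
    have t2 : Tendsto (fun x : ℝ => (2 * x) ^ (γ - 1) * Real.exp (-x)) atTop (nhds 0) := by
      have base := (tendsto_rpow_mul_exp_neg_mul_atTop_nhds_zero (γ - 1) 1
        one_pos).const_mul ((2 : ℝ) ^ (γ - 1))
      rw [mul_zero] at base
      refine base.congr' ?_
      filter_upwards [eventually_ge_atTop (0 : ℝ)] with x hx
      rw [Real.mul_rpow (by norm_num) hx, neg_one_mul]
      ring
    have htend : Tendsto (fun x : ℝ => lam / D * ((2 ^ (γ - 1) + 1) *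
        (A * Real.exp (-x) + B * ((2 * x) ^ (γ - 1) * Real.exp (-x))))) atTop (nhds 0) := by
      have h0 := (t1.const_mul A).add (t2.const_mul B)
      simp only [mul_zero, add_zero] at h0
      have h1 := (h0.const_mul ((2 : ℝ) ^ (γ - 1) + 1)).const_mul (lam / D)
      simpa using h1
    have hGt : Tendsto G atTop (nhds 0) := by
      refine squeeze_zero' ?_ ?_ htend
      · filter_upwards [eventually_ge_atTop (0 : ℝ)] with x hx
        exact (hGpos x hx).le
      · filter_upwards [eventually_ge_atTop (0 : ℝ)] with x hx
        exact hbound x hx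
    have hcomp : Tendsto (fun h : ℝ => μ * |h|) (cocompact ℝ) atTop := by
      have habs : Tendsto (fun h : ℝ => |h|) (cocompact ℝ) atTop := by
        exact (tendsto_norm_cocompact_atTop (E := ℝ)).congr fun h => Real.norm_eq_abs h
      exact habs.const_mul_atTop hμ
    exact (hGt.comp hcomp).congr fun h => (hstat h).symm
end
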